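/- For all N, h ∈ ℕ one has the decomposition Δ(N,h) = C_{Λ,Λ_N}(N,h) − ∑_{q ≤ N} (Λ̂_N(q)/φ(q)) c_q(h) ∑_{n ≤ N} Λ(n) c_q(n) − ℛ(N,h), where ℛ(N,h) = ∑_{n ≤ N} ∑_{q ≤ N, gcd(n,q) > 1} Λ(n) Λ̂_N(q) ( c_q(n+h) − c_q(n) c_q(h) / φ(q) ). -/

import Mathlib

open Finset

/-- The Ramanujan sum `c_q(n) = ∑_{1 ≤ j ≤ q, gcd(j,q)=1} exp(2πi j n / q)`. -/
noncomputable def cq (q : ℕ) (n : ℤ) : ℂ :=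
  ∑ j ∈ (Finset.Icc 1 q).filter (fun j => Nat.Coprime j q),
    Complex.exp (2 * Real.pi * Complex.I * j * n / q)

/-- The incomplete von Mangoldt function `Λ_N(n) = -∑_{d ≤ N, d ∣ n} μ(d) log d`. -/
noncomputable def LamN (N n : ℕ) : ℝ :=
  -∑ d ∈ (Finset.Icc 1 N).filter (fun d => d ∣ n),
    (ArithmeticFunction.moebius d : ℝ) * Real.log d

/-- The correlation `C_{Λ,Λ_N}(N, n) = ∑_{m ≤ N} Λ(m) Λ_N(m + n)`. -/
noncomputable def corr (N n : ℕ) : ℝ :=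
  ∑ m ∈ Finset.Icc 1 N, ArithmeticFunction.vonMangoldt m * LamN N (m + n)

/-- The Ramanujan coefficient `Λ̂_N(q) = -(μ(q)/q) ∑_{d ≤ N/q, gcd(d,q)=1} μ(d) log(dq)/d`. -/
noncomputable def LamHat (N q : ℕ) : ℝ :=
  -((ArithmeticFunction.moebius q : ℝ) / q) *
    ∑ d ∈ (Finset.Icc 1 (N / q)).filter (fun d => Nat.Coprime d q),
      (ArithmeticFunction.moebius d : ℝ) * Real.log (d * q) / d

/-- `ℤ_q^* = {m ∈ ℕ ∩ [1,q] : gcd(m,q) = 1}`. -/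
def Zstar (q : ℕ) : Finset ℕ := (Finset.Icc 1 q).filter (fun m => Nat.Coprime m q)

/-- `ψ(N; q, k) = ∑_{n ≤ N, n ≡ k (mod q)} Λ(n)`. -/
noncomputable def psi (N q k : ℕ) : ℝ :=
  ∑ n ∈ (Finset.Icc 1 N).filter (fun n => n % q = k % q),
    ArithmeticFunction.vonMangoldt n

/-- `δ(h; q, k) = c_q(k+h) - (μ(q)/φ(q)) c_q(h)`. -/
noncomputable def dev (h q k : ℕ) : ℂ :=
  cq q ((k : ℤ) + h) - (ArithmeticFunction.moebius q : ℂ) / (Nat.totient q : ℂ) * cq q h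

/-- `Δ(N, h) = ∑_{q ≤ N} Λ̂_N(q) ∑_{k ∈ ℤ_q^*} ψ(N;q,k) δ(h;q,k)`. -/
noncomputable def Delta (N h : ℕ) : ℂ :=
  ∑ q ∈ Finset.Icc 1 N, (LamHat N q : ℂ) *
    ∑ k ∈ Zstar q, (psi N q k : ℂ) * dev h q k

/-- `S_N(q, k; r) = ∑_{n ≤ N, n ≡ k (mod q)} c_r(n)`. -/
noncomputable def SN (N q : ℕ) (k : ℤ) (r : ℕ) : ℂ :=
  ∑ n ∈ (Finset.Icc 1 N).filter (fun n : ℕ => (n : ℤ) % (q : ℤ) = k % (q : ℤ)), cq r n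

/-- The remainder term `ℛ(N,h)`. -/
noncomputable def RR (N h : ℕ) : ℂ :=
  ∑ n ∈ Finset.Icc 1 N, ∑ q ∈ (Finset.Icc 1 N).filter (fun q => 1 < Nat.gcd n q),
    (ArithmeticFunction.vonMangoldt n : ℂ) * (LamHat N q : ℂ) *
      (cq q ((n : ℤ) + h) - cq q (n : ℤ) * cq q (h : ℤ) / (Nat.totient q : ℂ))

open Complex ArithmeticFunction

lemma cq_congr (q : ℕ) (hq : 0 < q) {a b : ℤ} (hab : (q : ℤ) ∣ a - b) :
    cq q a = cq q b := by
  obtain ⟨t, ht⟩ := hab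
  have ha : a = b + q * t := by linarith
  unfold cq
  refine Finset.sum_congr rfl fun j hj => ?_
  have hq0 : (q : ℂ) ≠ 0 := Nat.cast_ne_zero.mpr hq.ne'
  have : (2 * Real.pi * Complex.I * j * a / q : ℂ)
      = 2 * Real.pi * Complex.I * j * b / q + ((j * t : ℤ) : ℂ) * (2 * Real.pi * Complex.I) := by
    subst ha
    push_cast
    field_simp
  rw [this, Complex.exp_add, Complex.exp_int_mul_two_pi_mul_I, mul_one]

lemma sum_Icc_exp (d : ℕ) (hd : 0 < d) (n : ℤ) :
    ∑ j ∈ Finset.Icc 1 d, Complex.exp (2 * Real.pi * Complex.I * j * n / d)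
      = if (d : ℤ) ∣ n then (d : ℂ) else 0 := by
  have hd0 : (d : ℂ) ≠ 0 := Nat.cast_ne_zero.mpr hd.ne'
  set z : ℂ := Complex.exp (2 * Real.pi * Complex.I * n / d) with hz
  have hterm : ∀ j : ℕ, Complex.exp (2 * Real.pi * Complex.I * j * n / d) = z ^ j := by
    intro j
    rw [hz, ← Complex.exp_nat_mul]
    congr 1
    ring
  have hzd : z ^ d = 1 := by
    rw [← Complex.exp_nat_mul]
    have : (d : ℂ) * (2 * Real.pi * Complex.I * n / d) = n * (2 * Real.pi * Complex.I) := by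
      field_simp
    rw [this, Complex.exp_int_mul_two_pi_mul_I]
  by_cases hdvd : (d : ℤ) ∣ n
  · obtain ⟨t, ht⟩ := id hdvd
    have hz1 : z = 1 := by
      rw [hz]
      have : (2 * Real.pi * Complex.I * n / d : ℂ) = (t : ℂ) * (2 * Real.pi * Complex.I) := by
        rw [ht]; push_cast; field_simp
      rw [this, Complex.exp_int_mul_two_pi_mul_I]
    simp only [hdvd, if_true]
    rw [Finset.sum_congr rfl (fun j _ => hterm j)]
    simp [hz1, Nat.card_Icc]
  · have hz1 : z ≠ 1 := by
      intro hz1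
      obtain ⟨k, hk⟩ := Complex.exp_eq_one_iff.mp (hz ▸ hz1)
      apply hdvd
      have h2pi : (2 * Real.pi * Complex.I : ℂ) ≠ 0 := by
        simp [Real.pi_ne_zero, Complex.I_ne_zero]
      have hd' : (n : ℂ) * (2 * Real.pi * Complex.I) = ((d : ℂ) * k) * (2 * Real.pi * Complex.I) := by
        field_simp at hk
        linear_combination (2 * Real.pi * Complex.I) * hk
      have : (n : ℂ) = (d : ℂ) * k := mul_right_cancel₀ h2pi hd'
      exact ⟨k, by exact_mod_cast this⟩
    rw [Finset.sum_congr rfl (fun j _ => hterm j)]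
    have hIcc : Finset.Icc 1 d = Finset.Ico 1 (d + 1) := by
      rw [Finset.Ico_add_one_right_eq_Icc]
    rw [hIcc, Finset.sum_Ico_eq_sum_range]
    simp only [Nat.add_sub_cancel]
    have : ∑ i ∈ Finset.range d, z ^ (1 + i) = z * ∑ i ∈ Finset.range d, z ^ i := by
      rw [Finset.mul_sum]
      exact Finset.sum_congr rfl fun i _ => by rw [pow_add, pow_one]
    rw [this, geom_sum_eq hz1, hzd]
    simp [hdvd]

lemma sum_divisors_cq (d : ℕ) (hd : 0 < d) (n : ℤ) :
    ∑ e ∈ d.divisors, cq e n = if (d : ℤ) ∣ n then (d : ℂ) else 0 := by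
  rw [← sum_Icc_exp d hd n]
  unfold cq
  rw [Finset.sum_sigma']
  refine Finset.sum_nbij' (fun p => p.2 * (d / p.1)) (fun m => ⟨d / Nat.gcd m d, m / Nat.gcd m d⟩)
    ?_ ?_ ?_ ?_ ?_
  · rintro ⟨e, j⟩ hp
    simp only [Finset.mem_sigma, Nat.mem_divisors, Finset.mem_filter, Finset.mem_Icc] at hp
    obtain ⟨⟨hed, _⟩, ⟨⟨hj1, hje⟩, hco⟩⟩ := hp
    have he0 : 0 < e := lt_of_lt_of_le hj1 hje
    have hde : 0 < d / e := Nat.div_pos (Nat.le_of_dvd hd hed) he0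
    simp only [Finset.mem_Icc]
    constructor
    · exact Nat.one_le_iff_ne_zero.mpr (Nat.mul_ne_zero (Nat.one_le_iff_ne_zero.mp hj1) hde.ne')
    · calc j * (d / e) ≤ e * (d / e) := Nat.mul_le_mul_right _ hje
        _ = d := Nat.mul_div_cancel' hed
  · intro m hm
    simp only [Finset.mem_Icc] at hm
    have hg : 0 < Nat.gcd m d := Nat.gcd_pos_of_pos_right m hd
    have hgd : Nat.gcd m d ∣ d := Nat.gcd_dvd_right m d
    have hgm : Nat.gcd m d ∣ m := Nat.gcd_dvd_left m d
    simp only [Finset.mem_sigma, Nat.mem_divisors, Finset.mem_filter, Finset.mem_Icc]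
    refine ⟨⟨Nat.div_dvd_of_dvd hgd, hd.ne'⟩, ⟨⟨?_, ?_⟩, ?_⟩⟩
    · exact Nat.div_pos (Nat.le_of_dvd hm.1 hgm) hg
    · exact Nat.div_le_div_right hm.2
    · exact Nat.coprime_div_gcd_div_gcd hg
  · rintro ⟨e, j⟩ hp
    simp only [Finset.mem_sigma, Nat.mem_divisors, Finset.mem_filter, Finset.mem_Icc] at hp
    obtain ⟨⟨hed, _⟩, ⟨⟨hj1, hje⟩, hco⟩⟩ := hp
    have he0 : 0 < e := lt_of_lt_of_le hj1 hje
    have hde : 0 < d / e := Nat.div_pos (Nat.le_of_dvd hd hed) he0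
    have hgcd : Nat.gcd (j * (d / e)) d = d / e := by
      calc Nat.gcd (j * (d / e)) d = Nat.gcd (j * (d / e)) (e * (d / e)) := by
            rw [Nat.mul_div_cancel' hed]
        _ = Nat.gcd j e * (d / e) := Nat.gcd_mul_right _ _ _
        _ = d / e := by rw [hco, one_mul]
    ext
    · simp only [hgcd]
      rw [Nat.div_div_self hed hd.ne']
    · simp only [hgcd]
      rw [Nat.mul_div_cancel _ hde]
  · intro m hm
    simp only [Finset.mem_Icc] at hm
    have hg : 0 < Nat.gcd m d := Nat.gcd_pos_of_pos_right m hd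
    have hgd : Nat.gcd m d ∣ d := Nat.gcd_dvd_right m d
    have hgm : Nat.gcd m d ∣ m := Nat.gcd_dvd_left m d
    simp only
    rw [Nat.div_div_self hgd hd.ne', Nat.div_mul_cancel hgm]
  · rintro ⟨e, j⟩ hp
    simp only [Finset.mem_sigma, Nat.mem_divisors, Finset.mem_filter, Finset.mem_Icc] at hp
    obtain ⟨⟨hed, _⟩, ⟨⟨hj1, hje⟩, hco⟩⟩ := hp
    have he0 : 0 < e := lt_of_lt_of_le hj1 hje
    have he0' : (e : ℂ) ≠ 0 := Nat.cast_ne_zero.mpr he0.ne'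
    have hd0' : (d : ℂ) ≠ 0 := Nat.cast_ne_zero.mpr hd.ne'
    have hme : (j * (d / e)) * e = j * d := by
      rw [mul_assoc, mul_comm (d / e) e, Nat.mul_div_cancel' hed]
    have hmec : ((j * (d / e) : ℕ) : ℂ) * e = (j : ℂ) * d := by exact_mod_cast hme
    have harg : (2 * (Real.pi : ℂ) * Complex.I * j * n / e : ℂ)
        = 2 * (Real.pi : ℂ) * Complex.I * ((j * (d / e) : ℕ) : ℂ) * n / d := by
      rw [div_eq_div_iff he0' hd0']
      linear_combination (-(2 * (Real.pi : ℂ) * Complex.I * (n : ℂ))) * hmec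
    rw [harg]

lemma cq_coprime (q : ℕ) (hq : 0 < q) (n : ℕ) (hco : Nat.Coprime n q) :
    cq q (n : ℤ) = (moebius q : ℂ) := by
  have h1 : ∀ d > 0, ∑ i ∈ d.divisors, cq i (n : ℤ)
      = (fun d : ℕ => if (d : ℤ) ∣ (n : ℤ) then (d : ℂ) else 0) d :=
    fun d hd => sum_divisors_cq d hd n
  have h2 := (ArithmeticFunction.sum_eq_iff_sum_smul_moebius_eq.mp h1) q hq
  rw [← h2]
  rw [Finset.sum_eq_single (q, 1)]
  · simp
  · rintro ⟨a, b⟩ hab hne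
    simp only [Nat.mem_divisorsAntidiagonal] at hab
    have hb : b ∣ q := Dvd.intro_left a hab.1
    have hbn : ¬ ((b : ℤ) ∣ (n : ℤ)) := by
      intro hdvd
      have hbn' : b ∣ n := Int.ofNat_dvd.mp hdvd
      have hb1 : b = 1 := Nat.eq_one_of_dvd_coprimes hco.symm hb hbn'
      apply hne
      have : a = q := by rw [← hab.1, hb1, mul_one]
      rw [this, hb1]
    simp [hbn]
  · intro hmem
    exact absurd (Nat.mem_divisorsAntidiagonal.mpr ⟨mul_one q, hq.ne'⟩) hmem

lemma lamN_expansion (N m : ℕ) :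
    (LamN N m : ℂ) = ∑ q ∈ Finset.Icc 1 N, (LamHat N q : ℂ) * cq q (m : ℤ) := by
  -- Step 1
  have step1 : (LamN N m : ℂ)
      = ∑ d ∈ Finset.Icc 1 N, (-(moebius d : ℂ) * Real.log d / d) *
          ∑ e ∈ d.divisors, cq e (m : ℤ) := by
    have : ∀ d ∈ Finset.Icc 1 N, (-(moebius d : ℂ) * Real.log d / d) *
          (∑ e ∈ d.divisors, cq e (m : ℤ))
        = if d ∣ m then -(moebius d : ℂ) * Real.log d else 0 := by
      intro d hd
      rw [Finset.mem_Icc] at hd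
      have hd0 : (0:ℕ) < d := hd.1
      have hd0' : (d : ℂ) ≠ 0 := Nat.cast_ne_zero.mpr hd0.ne'
      rw [sum_divisors_cq d hd0 (m : ℤ)]
      by_cases hdm : d ∣ m
      · have : (d : ℤ) ∣ (m : ℤ) := Int.natCast_dvd_natCast.mpr hdm
        rw [if_pos this, if_pos hdm]
        field_simp
      · have : ¬ ((d : ℤ) ∣ (m : ℤ)) := fun h => hdm (Int.natCast_dvd_natCast.mp h)
        rw [if_neg this, if_neg hdm, mul_zero]
    rw [Finset.sum_congr rfl this, ← Finset.sum_filter]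
    unfold LamN
    push_cast
    rw [← Finset.sum_neg_distrib]
    exact Finset.sum_congr rfl fun d _ => by ring
  rw [step1]
  -- Step 2: swap
  have hdiv : ∀ d ∈ Finset.Icc 1 N, d.divisors = (Finset.Icc 1 N).filter (· ∣ d) := by
    intro d hd
    rw [Finset.mem_Icc] at hd
    ext e
    simp only [Nat.mem_divisors, Finset.mem_filter, Finset.mem_Icc]
    constructor
    · rintro ⟨hed, -⟩
      exact ⟨⟨Nat.one_le_iff_ne_zero.mpr (by rintro rfl; simp at hed; omega),
        le_trans (Nat.le_of_dvd (by omega) hed) hd.2⟩, hed⟩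
    · rintro ⟨-, hed⟩
      exact ⟨hed, by omega⟩
  have step2 : ∑ d ∈ Finset.Icc 1 N, (-(moebius d : ℂ) * Real.log d / d) *
          ∑ e ∈ d.divisors, cq e (m : ℤ)
      = ∑ e ∈ Finset.Icc 1 N,
          (∑ d ∈ (Finset.Icc 1 N).filter (e ∣ ·), (-(moebius d : ℂ) * Real.log d / d))
            * cq e (m : ℤ) := by
    calc ∑ d ∈ Finset.Icc 1 N, (-(moebius d : ℂ) * Real.log d / d) *
            ∑ e ∈ d.divisors, cq e (m : ℤ)
        = ∑ d ∈ Finset.Icc 1 N, ∑ e ∈ Finset.Icc 1 N,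
            (if e ∣ d then (-(moebius d : ℂ) * Real.log d / d) * cq e (m : ℤ) else 0) := by
          refine Finset.sum_congr rfl fun d hd => ?_
          rw [hdiv d hd, Finset.sum_filter, Finset.mul_sum]
          try simp [mul_ite, mul_zero]
      _ = ∑ e ∈ Finset.Icc 1 N, ∑ d ∈ Finset.Icc 1 N,
            (if e ∣ d then (-(moebius d : ℂ) * Real.log d / d) * cq e (m : ℤ) else 0) :=
          Finset.sum_comm
      _ = _ := by
          refine Finset.sum_congr rfl fun e he => ?_
          rw [Finset.sum_mul, Finset.sum_filter]
          try simp [ite_mul, zero_mul]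
  rw [step2]
  -- Step 3
  refine Finset.sum_congr rfl fun e he => ?_
  rw [Finset.mem_Icc] at he
  have he0 : (0:ℕ) < e := he.1
  have he0' : (e : ℂ) ≠ 0 := Nat.cast_ne_zero.mpr he0.ne'
  congr 1
  have reindex : ∑ d ∈ (Finset.Icc 1 N).filter (e ∣ ·), (-(moebius d : ℂ) * Real.log d / d)
      = ∑ t ∈ Finset.Icc 1 (N / e), (-(moebius (e * t) : ℂ) * Real.log (e * t) / (e * t)) := by
    refine Finset.sum_nbij' (fun d => d / e) (fun t => e * t) ?_ ?_ ?_ ?_ ?_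
    · intro d hd
      simp only [Finset.mem_filter, Finset.mem_Icc] at hd ⊢
      obtain ⟨⟨hd1, hdN⟩, hed⟩ := hd
      exact ⟨Nat.div_pos (Nat.le_of_dvd (by omega) hed) he0, Nat.div_le_div_right hdN⟩
    · intro t ht
      simp only [Finset.mem_filter, Finset.mem_Icc] at ht ⊢
      obtain ⟨ht1, htN⟩ := ht
      refine ⟨⟨Nat.one_le_iff_ne_zero.mpr (Nat.mul_ne_zero he0.ne' (by omega)), ?_⟩,
        Dvd.intro t rfl⟩
      calc e * t = t * e := mul_comm _ _
        _ ≤ N := (Nat.le_div_iff_mul_le he0).mp htN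
    · intro d hd
      simp only [Finset.mem_filter] at hd
      exact Nat.mul_div_cancel' hd.2
    · intro t ht
      exact Nat.mul_div_cancel_left t he0
    · intro d hd
      simp only [Finset.mem_filter] at hd
      obtain ⟨t, rfl⟩ := hd.2
      simp only [Nat.mul_div_cancel_left t he0]
      push_cast
      ring
  rw [reindex]
  rw [← Finset.sum_filter_add_sum_filter_not (Finset.Icc 1 (N / e)) (fun t => Nat.Coprime t e)]
  have hzero : ∑ t ∈ (Finset.Icc 1 (N / e)).filter (fun t => ¬ Nat.Coprime t e),
      (-(moebius (e * t) : ℂ) * Real.log (e * t) / (e * t)) = 0 := by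
    refine Finset.sum_eq_zero fun t ht => ?_
    simp only [Finset.mem_filter] at ht
    have : ¬ Squarefree (e * t) := by
      rw [Nat.squarefree_mul_iff]
      rintro ⟨hco, -, -⟩
      exact ht.2 (Nat.Coprime.symm hco)
    rw [moebius_eq_zero_of_not_squarefree this]
    simp
  rw [hzero, add_zero]
  unfold LamHat
  push_cast
  rw [Finset.mul_sum]
  refine Finset.sum_congr rfl fun t ht => ?_
  simp only [Finset.mem_filter, Finset.mem_Icc] at ht
  obtain ⟨⟨ht1, -⟩, hco⟩ := ht
  have ht0' : (t : ℂ) ≠ 0 := Nat.cast_ne_zero.mpr (by omega)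
  have hmu : moebius (e * t) = moebius e * moebius t :=
    isMultiplicative_moebius.map_mul_of_coprime (Nat.Coprime.symm hco)
  have hmuc : ((moebius (e * t) : ℤ) : ℂ) = ((moebius e : ℤ) : ℂ) * ((moebius t : ℤ) : ℂ) := by
    exact_mod_cast hmu
  rw [hmuc]
  have hlog : Real.log ((t : ℝ) * (e : ℝ)) = Real.log ((e : ℝ) * (t : ℝ)) := by rw [mul_comm]
  push_cast
  rw [hlog]
  field_simp

lemma mod_inj {q k k' : ℕ} (h1 : 1 ≤ k) (h2 : k ≤ q) (h1' : 1 ≤ k') (h2' : k' ≤ q)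
    (h : k % q = k' % q) : k = k' := by
  rcases lt_or_eq_of_le h2 with hk | hk
  · rcases lt_or_eq_of_le h2' with hk' | hk'
    · rwa [Nat.mod_eq_of_lt hk, Nat.mod_eq_of_lt hk'] at h
    · subst hk'
      rw [Nat.mod_eq_of_lt hk, Nat.mod_self] at h
      omega
  · subst hk
    rcases lt_or_eq_of_le h2' with hk' | hk'
    · rw [Nat.mod_self, Nat.mod_eq_of_lt hk'] at h
      omega
    · omega

lemma gcd_eq_of_mod_eq {q n k : ℕ} (h : n % q = k % q) : Nat.gcd n q = Nat.gcd k q := by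
  rw [Nat.gcd_comm n q, Nat.gcd_rec q n, h, ← Nat.gcd_rec q k, Nat.gcd_comm q k]


/-- the decomposition
`Δ(N,h) = C_{Λ,Λ_N}(N,h) − ∑_{q ≤ N} (Λ̂_N(q)/φ(q)) c_q(h) ∑_{n ≤ N} Λ(n) c_q(n) − ℛ(N,h)`. -/
theorem stmt9 (N h : ℕ) (hN : 1 ≤ N) (hh : 1 ≤ h) :
    Delta N h = (corr N h : ℂ) -
      (∑ q ∈ Finset.Icc 1 N, (LamHat N q : ℂ) / (Nat.totient q : ℂ) * cq q (h : ℤ) *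
        ∑ n ∈ Finset.Icc 1 N, (ArithmeticFunction.vonMangoldt n : ℂ) * cq q (n : ℤ)) -
      RR N h := by
  set vM := ArithmeticFunction.vonMangoldt with hvM
  set F : ℕ → ℕ → ℂ := fun n q => (vM n : ℂ) * (LamHat N q : ℂ) *
      (cq q ((n : ℤ) + h) - cq q (n : ℤ) * cq q (h : ℤ) / (Nat.totient q : ℂ)) with hF
  -- Step A
  have stepA : ∀ q ∈ Finset.Icc 1 N, (LamHat N q : ℂ) *
      (∑ k ∈ Zstar q, (psi N q k : ℂ) * dev h q k)
      = ∑ n ∈ (Finset.Icc 1 N).filter (fun n => Nat.Coprime n q), F n q := by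
    intro q hq
    rw [Finset.mem_Icc] at hq
    have hq0 : 0 < q := hq.1
    have hterm : ∀ k ∈ Zstar q, (psi N q k : ℂ) * dev h q k
        = ∑ n ∈ (Finset.Icc 1 N).filter (fun n => n % q = k % q),
            (vM n : ℂ) * (cq q ((n : ℤ) + h) - cq q (n : ℤ) * cq q (h : ℤ) / (Nat.totient q : ℂ)) := by
      intro k hk
      simp only [Zstar, Finset.mem_filter, Finset.mem_Icc] at hk
      obtain ⟨⟨hk1, hkq⟩, hkco⟩ := hk
      have hpsi : (psi N q k : ℂ)
          = ∑ n ∈ (Finset.Icc 1 N).filter (fun n => n % q = k % q), (vM n : ℂ) := by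
        unfold psi; push_cast; rfl
      rw [hpsi, Finset.sum_mul]
      refine Finset.sum_congr rfl fun n hn => ?_
      simp only [Finset.mem_filter, Finset.mem_Icc] at hn
      obtain ⟨⟨hn1, hnN⟩, hnk⟩ := hn
      have hnco : Nat.Coprime n q := by
        unfold Nat.Coprime
        rw [gcd_eq_of_mod_eq hnk]
        exact hkco
      have hmod : n ≡ k [MOD q] := hnk
      have hdvd : (q : ℤ) ∣ (k : ℤ) - n := hmod.dvd
      have hcq1 : cq q ((k : ℤ) + h) = cq q ((n : ℤ) + h) := by
        refine cq_congr q hq0 ?_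
        have : ((k : ℤ) + h) - ((n : ℤ) + h) = (k : ℤ) - n := by ring
        rw [this]; exact hdvd
      have hcq2 : cq q (n : ℤ) = (moebius q : ℂ) := cq_coprime q hq0 n hnco
      unfold dev
      rw [hcq1, hcq2]
      ring
    rw [Finset.sum_congr rfl hterm]
    have hdisj : (↑(Zstar q) : Set ℕ).PairwiseDisjoint
        (fun k => (Finset.Icc 1 N).filter (fun n => n % q = k % q)) := by
      intro k hk k' hk' hne
      simp only [Finset.coe_filter, Zstar, Finset.mem_coe, Finset.mem_filter,
        Finset.mem_Icc] at hk hk'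
      refine Finset.disjoint_left.mpr fun n hn hn' => ?_
      simp only [Finset.mem_filter] at hn hn'
      exact hne (mod_inj hk.1.1 hk.1.2 hk'.1.1 hk'.1.2 (hn.2.symm.trans hn'.2))
    have hunion : (Zstar q).biUnion (fun k => (Finset.Icc 1 N).filter (fun n => n % q = k % q))
        = (Finset.Icc 1 N).filter (fun n => Nat.Coprime n q) := by
      ext n
      simp only [Finset.mem_biUnion, Finset.mem_filter, Finset.mem_Icc, Zstar]
      constructor
      · rintro ⟨k, ⟨⟨hk1, hkq⟩, hkco⟩, ⟨⟨hn1, hnN⟩, hnk⟩⟩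
        refine ⟨⟨hn1, hnN⟩, ?_⟩
        unfold Nat.Coprime
        rw [gcd_eq_of_mod_eq hnk]
        exact hkco
      · rintro ⟨⟨hn1, hnN⟩, hnco⟩
        refine ⟨if n % q = 0 then q else n % q, ⟨⟨?_, ?_⟩, ?_⟩, ⟨⟨hn1, hnN⟩, ?_⟩⟩
        · split
          · exact hq0
          · omega
        · split
          · exact le_refl q
          · exact le_of_lt (Nat.mod_lt n hq0)
        · have hmodeq : (if n % q = 0 then q else n % q) % q = n % q := by
            split
            · rename_i h0
              rw [Nat.mod_self, h0]
            · exact Nat.mod_eq_of_lt (Nat.mod_lt n hq0)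
          unfold Nat.Coprime
          rw [gcd_eq_of_mod_eq hmodeq]
          exact hnco
        · symm
          split
          · rename_i h0
            rw [Nat.mod_self, h0]
          · exact Nat.mod_eq_of_lt (Nat.mod_lt n hq0)
    rw [← hunion, Finset.sum_biUnion hdisj, Finset.mul_sum]
    refine Finset.sum_congr rfl fun k hk => ?_
    rw [Finset.mul_sum]
    refine Finset.sum_congr rfl fun n hn => ?_
    rw [hF]
    ring
  -- Delta as difference of full sum and non-coprime sum
  have hDelta : Delta N h = (∑ q ∈ Finset.Icc 1 N, ∑ n ∈ Finset.Icc 1 N, F n q)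
      - ∑ q ∈ Finset.Icc 1 N,
          ∑ n ∈ (Finset.Icc 1 N).filter (fun n => ¬ Nat.Coprime n q), F n q := by
    unfold Delta
    rw [← Finset.sum_sub_distrib]
    refine Finset.sum_congr rfl fun q hq => ?_
    rw [stepA q hq,
      ← Finset.sum_filter_add_sum_filter_not (Finset.Icc 1 N) (fun n => Nat.Coprime n q)
        (fun n => F n q)]
    ring
  -- non-coprime part equals RR
  have hRReq : ∑ q ∈ Finset.Icc 1 N,
      ∑ n ∈ (Finset.Icc 1 N).filter (fun n => ¬ Nat.Coprime n q), F n q = RR N h := by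
    unfold RR
    calc ∑ q ∈ Finset.Icc 1 N, ∑ n ∈ (Finset.Icc 1 N).filter (fun n => ¬ Nat.Coprime n q), F n q
        = ∑ q ∈ Finset.Icc 1 N, ∑ n ∈ Finset.Icc 1 N,
            (if ¬ Nat.Coprime n q then F n q else 0) := by
          exact Finset.sum_congr rfl fun q _ => Finset.sum_filter _ _
      _ = ∑ n ∈ Finset.Icc 1 N, ∑ q ∈ Finset.Icc 1 N,
            (if ¬ Nat.Coprime n q then F n q else 0) := Finset.sum_comm
      _ = _ := by
          refine Finset.sum_congr rfl fun n hn => ?_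
          rw [Finset.mem_Icc] at hn
          rw [Finset.sum_filter]
          refine Finset.sum_congr rfl fun q hq => ?_
          rw [Finset.mem_Icc] at hq
          have hpos : 0 < Nat.gcd n q := Nat.gcd_pos_of_pos_left q (by omega)
          have hiff : (¬ Nat.Coprime n q) ↔ (1 < Nat.gcd n q) := by
            unfold Nat.Coprime
            omega
          rw [if_congr hiff rfl rfl]
  -- full sum equals corr minus middle term
  have hT1 : ∑ q ∈ Finset.Icc 1 N, ∑ n ∈ Finset.Icc 1 N, F n q
      = (corr N h : ℂ) -
        ∑ q ∈ Finset.Icc 1 N, (LamHat N q : ℂ) / (Nat.totient q : ℂ) * cq q (h : ℤ) *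
          ∑ n ∈ Finset.Icc 1 N, (vM n : ℂ) * cq q (n : ℤ) := by
    have hsplit : ∀ q ∈ Finset.Icc 1 N, ∑ n ∈ Finset.Icc 1 N, F n q
        = (∑ n ∈ Finset.Icc 1 N, (vM n : ℂ) * ((LamHat N q : ℂ) * cq q ((n : ℤ) + h)))
          - (LamHat N q : ℂ) / (Nat.totient q : ℂ) * cq q (h : ℤ) *
              ∑ n ∈ Finset.Icc 1 N, (vM n : ℂ) * cq q (n : ℤ) := by
      intro q hq
      rw [Finset.mul_sum, ← Finset.sum_sub_distrib]
      refine Finset.sum_congr rfl fun n hn => ?_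
      rw [hF]
      ring
    rw [Finset.sum_congr rfl hsplit, Finset.sum_sub_distrib]
    congr 1
    rw [Finset.sum_comm]
    have hcorr : ∀ n ∈ Finset.Icc 1 N,
        ∑ q ∈ Finset.Icc 1 N, (vM n : ℂ) * ((LamHat N q : ℂ) * cq q ((n : ℤ) + h))
        = (vM n : ℂ) * (LamN N (n + h) : ℂ) := by
      intro n hn
      rw [← Finset.mul_sum]
      congr 1
      rw [lamN_expansion N (n + h)]
      refine Finset.sum_congr rfl fun q hq => ?_
      congr 1
      all_goals push_cast
      all_goals try ring
    rw [Finset.sum_congr rfl hcorr]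
    unfold corr
    push_cast
    rfl
  rw [hDelta, hRReq, hT1]
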